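/- Let P ⊂ ℝ^d be a finite configuration, A ⊆ Q(0,R) a measurable set avoiding P (containing no congruent copy of P), and let A' = A + (R + diam P)·ℤ^d be its periodization. Then A' also avoids P, and A' has well-defined density d(A') = vol(A)/(R + diam P)^d. -/

import Mathlib

open MeasureTheory Filter

noncomputable section

/-- Borel σ-algebra on real matrices. -/
instance matMeasurableSpace {d : ℕ} : MeasurableSpace (Matrix (Fin d) (Fin d) ℝ) := borel _

/-- The action of an orthogonal matrix on Euclidean space. -/
def act {d : ℕ} (T : Matrix.orthogonalGroup (Fin d) ℝ)
    (v : EuclideanSpace ℝ (Fin d)) : EuclideanSpace ℝ (Fin d) :=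
  (EuclideanSpace.equiv (Fin d) ℝ).symm
    ((T : Matrix (Fin d) (Fin d) ℝ).mulVec (EuclideanSpace.equiv (Fin d) ℝ v))

/-- Open axis-parallel cube of side length `R` centered at `x`. -/
def cube {d : ℕ} (x : EuclideanSpace ℝ (Fin d)) (R : ℝ) : Set (EuclideanSpace ℝ (Fin d)) :=
  {y | ∀ j, |y j - x j| < R / 2}

/-- `A` contains a congruent copy of the configuration `P`. -/
def hasCopy {d : ℕ} (A P : Set (EuclideanSpace ℝ (Fin d))) : Prop :=
  ∃ (x : EuclideanSpace ℝ (Fin d)) (T : Matrix.orthogonalGroup (Fin d) ℝ),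
    (fun p => x + act T p) '' P ⊆ A

/-- The upper density of a set `A ⊆ ℝ^d`. -/
def upperDensity {d : ℕ} (A : Set (EuclideanSpace ℝ (Fin d))) : ℝ :=
  limsup (fun T : ℝ =>
    (volume (A ∩ {y : EuclideanSpace ℝ (Fin d) | ∀ j, |y j| ≤ T})).toReal / (2 * T) ^ d) atTop

/-- Independence density of the configuration `P` in `ℝ^d`. -/
def mRd {d : ℕ} (P : Set (EuclideanSpace ℝ (Fin d))) : ℝ :=
  sSup (upperDensity '' {A | MeasurableSet A ∧ ¬ hasCopy A P})

/-- Independence density of `P` relative to the cube `Q(0,R)`. -/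
def mQcube {d : ℕ} (R : ℝ) (P : Set (EuclideanSpace ℝ (Fin d))) : ℝ :=
  sSup ((fun A => (volume A).toReal / R ^ d) ''
    {A | A ⊆ cube 0 R ∧ MeasurableSet A ∧ ¬ hasCopy A P})

lemma act_norm {d : ℕ} (T : Matrix.orthogonalGroup (Fin d) ℝ) (u : EuclideanSpace ℝ (Fin d)) :
    ‖act T u‖ = ‖u‖ := by
  have key : (inner ℝ (act T u) (act T u) : ℝ) = inner ℝ u u := by
    simp only [PiLp.inner_apply, RCLike.inner_apply, conj_trivial]
    show dotProduct ((T : Matrix (Fin d) (Fin d) ℝ).mulVec u.ofLp)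
        ((T : Matrix (Fin d) (Fin d) ℝ).mulVec u.ofLp) = dotProduct (α := ℝ) u.ofLp u.ofLp
    rw [Matrix.dotProduct_mulVec, Matrix.vecMul_mulVec,
      ← Matrix.conjTranspose_eq_transpose_of_trivial,
      ← Matrix.star_eq_conjTranspose, Matrix.UnitaryGroup.star_mul_self, Matrix.vecMul_one]
  rw [← Real.sqrt_sq (norm_nonneg (act T u)), ← Real.sqrt_sq (norm_nonneg u),
    ← real_inner_self_eq_norm_sq, ← real_inner_self_eq_norm_sq, key]

lemma act_sub {d : ℕ} (T : Matrix.orthogonalGroup (Fin d) ℝ) (u w : EuclideanSpace ℝ (Fin d)) :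
    act T u - act T w = act T (u - w) := by
  ext j
  show act T u j - act T w j = _
  show _ = ((T : Matrix (Fin d) (Fin d) ℝ).mulVec (u - w)) j
  rw [Matrix.mulVec_sub]
  rfl

lemma coord_abs_le_norm {d : ℕ} (y : EuclideanSpace ℝ (Fin d)) (j : Fin d) : |y j| ≤ ‖y‖ := by
  rw [EuclideanSpace.norm_eq, ← Real.sqrt_sq_eq_abs]
  apply Real.sqrt_le_sqrt
  have h : ‖y j‖ ^ 2 = y j ^ 2 := by simp [Real.norm_eq_abs, sq_abs]
  rw [← h]
  exact Finset.single_le_sum (f := fun i => ‖y i‖ ^ 2) (fun i _ => by positivity) (Finset.mem_univ j)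

/-- the lattice vector -/
def lvec {d : ℕ} (L : ℝ) (z : Fin d → ℤ) : EuclideanSpace ℝ (Fin d) :=
  (EuclideanSpace.equiv (Fin d) ℝ).symm (fun j => L * (z j : ℝ))

lemma lvec_apply {d : ℕ} (L : ℝ) (z : Fin d → ℤ) (j : Fin d) : lvec L z j = L * z j := rfl

lemma part1 {d : ℕ} (P : Set (EuclideanSpace ℝ (Fin d)))
    (hPfin : P.Finite) (hPne : P.Nonempty) (R : ℝ) (hR : 0 < R)
    (A : Set (EuclideanSpace ℝ (Fin d))) (hAQ : A ⊆ cube 0 R)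
    (hav : ¬ hasCopy A P)
    (A' : Set (EuclideanSpace ℝ (Fin d)))
    (hA' : A' = {y | ∃ a ∈ A, ∃ z : Fin d → ℤ, y = a + lvec (R + Metric.diam P) z}) :
    ¬ hasCopy A' P := by
  set L := R + Metric.diam P with hLdef
  have hdiam : 0 ≤ Metric.diam P := Metric.diam_nonneg
  rintro ⟨x, T, hsub⟩
  obtain ⟨p₀, hp₀⟩ := hPne
  have h0 : x + act T p₀ ∈ A' := hsub ⟨p₀, hp₀, rfl⟩
  rw [hA'] at h0
  obtain ⟨a₀, ha₀, z₀, hz₀⟩ := h0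
  apply hav
  refine ⟨x - lvec L z₀, T, ?_⟩
  rintro y ⟨p, hp, rfl⟩
  have hy : x + act T p ∈ A' := hsub ⟨p, hp, rfl⟩
  rw [hA'] at hy
  obtain ⟨a, ha, z, hz⟩ := hy
  have hzz : z = z₀ := by
    by_contra hne
    obtain ⟨j, hj⟩ := Function.ne_iff.mp hne
    have e1 : x j + act T p j = a j + L * z j := congrArg (fun w => w j) hz
    have e0 : x j + act T p₀ j = a₀ j + L * z₀ j := congrArg (fun w => w j) hz₀
    have dist_le : ‖(x + act T p) - (x + act T p₀)‖ ≤ Metric.diam P := by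
      have heq : (x + act T p) - (x + act T p₀) = act T p - act T p₀ := by abel
      rw [heq, act_sub, act_norm, ← dist_eq_norm]
      exact Metric.dist_le_diam_of_mem hPfin.isBounded hp hp₀
    have coord : |((x + act T p) - (x + act T p₀)) j| ≤ Metric.diam P :=
      le_trans (coord_abs_le_norm _ j) dist_le
    have ceq : ((x + act T p) - (x + act T p₀)) j
        = (a j - a₀ j) + L * ((z j : ℝ) - (z₀ j : ℝ)) := by
      have : ((x + act T p) - (x + act T p₀)) j = (x j + act T p j) - (x j + act T p₀ j) := rfl
      rw [this, e1, e0]; ring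
    rw [ceq] at coord
    have haj : |a j| < R / 2 := by simpa using hAQ ha j
    have ha0j : |a₀ j| < R / 2 := by simpa using hAQ ha₀ j
    have habs : |a j - a₀ j| ≤ |a j| + |a₀ j| := abs_sub _ _
    have hz1 : (1 : ℝ) ≤ |(z j : ℝ) - (z₀ j : ℝ)| := by
      have : (1 : ℤ) ≤ |z j - z₀ j| := Int.one_le_abs (sub_ne_zero.mpr hj)
      calc (1:ℝ) = ((1:ℤ):ℝ) := by norm_num
        _ ≤ ((|z j - z₀ j| : ℤ) : ℝ) := by exact_mod_cast this
        _ = |(z j : ℝ) - (z₀ j : ℝ)| := by push_cast [Int.cast_abs]; ring_nf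
    have hL1 : L ≤ L * |(z j : ℝ) - (z₀ j : ℝ)| := by
      nlinarith [hdiam, hR]
    have htri : L * |(z j : ℝ) - (z₀ j : ℝ)|
        ≤ |(a j - a₀ j) + L * ((z j : ℝ) - (z₀ j : ℝ))| + |a j - a₀ j| := by
      have h1 : |L * ((z j : ℝ) - (z₀ j : ℝ))|
          = |((a j - a₀ j) + L * ((z j : ℝ) - (z₀ j : ℝ))) - (a j - a₀ j)| := by ring_nf
      have h2 := abs_sub ((a j - a₀ j) + L * ((z j : ℝ) - (z₀ j : ℝ))) (a j - a₀ j)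
      rw [abs_mul, abs_of_pos (by linarith : (0:ℝ) < L)] at h1
      linarith [h1 ▸ h2]
    linarith
  rw [hzz] at hz
  have hfin : x - lvec L z₀ + act T p = a := by
    have : x + act T p = a + lvec L z₀ := hz
    have h2 : x - lvec L z₀ + act T p = (x + act T p) - lvec L z₀ := by abel
    rw [h2, this]; abel
  show x - lvec L z₀ + act T p ∈ A
  rw [hfin]; exact ha


def trS {d : ℕ} (L : ℝ) (A : Set (EuclideanSpace ℝ (Fin d))) (z : Fin d → ℤ) :
    Set (EuclideanSpace ℝ (Fin d)) := (fun a => a + lvec L z) '' A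

lemma trS_vol {d : ℕ} (L : ℝ) (A : Set (EuclideanSpace ℝ (Fin d))) (z : Fin d → ℤ) :
    volume (trS L A z) = volume A := by
  rw [trS, Set.image_add_right]
  exact measure_preimage_add_right volume _ A

lemma trS_meas {d : ℕ} (L : ℝ) {A : Set (EuclideanSpace ℝ (Fin d))} (hA : MeasurableSet A)
    (z : Fin d → ℤ) : MeasurableSet (trS L A z) := by
  rw [trS, Set.image_add_right]
  exact (measurable_add_const _) hA

lemma trS_disj {d : ℕ} {L R : ℝ} (hR : 0 < R) (hRL : R ≤ L)
    {A : Set (EuclideanSpace ℝ (Fin d))} (hAQ : A ⊆ cube 0 R) :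
    Pairwise (Function.onFun Disjoint fun z => trS L A z) := by
  intro z z' hne
  rw [Function.onFun, Set.disjoint_left]
  rintro y ⟨a, ha, rfl⟩ ⟨a', ha', heq⟩
  obtain ⟨j, hj⟩ := Function.ne_iff.mp hne
  have e : a' j + L * z' j = a j + L * z j := congrArg (fun w => w j) heq
  have haj : |a j| < R / 2 := by simpa using hAQ ha j
  have ha'j : |a' j| < R / 2 := by simpa using hAQ ha' j
  have hz1 : (1 : ℝ) ≤ |(z j : ℝ) - (z' j : ℝ)| := by
    have h1 : (1 : ℤ) ≤ |z j - z' j| := Int.one_le_abs (sub_ne_zero.mpr hj)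
    calc (1:ℝ) = ((1:ℤ):ℝ) := by norm_num
      _ ≤ ((|z j - z' j| : ℤ) : ℝ) := by exact_mod_cast h1
      _ = |(z j : ℝ) - (z' j : ℝ)| := by push_cast [Int.cast_abs]; ring_nf
  have hL : 0 < L := lt_of_lt_of_le hR hRL
  have e2 : a j - a' j = L * ((z' j : ℝ) - (z j : ℝ)) := by linarith [e]
  have : |a j - a' j| = L * |(z' j : ℝ) - (z j : ℝ)| := by
    rw [e2, abs_mul, abs_of_pos hL]
  have habs : |a j - a' j| ≤ |a j| + |a' j| := abs_sub _ _
  have : L ≤ |a j - a' j| := by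
    rw [this]
    have : |(z' j : ℝ) - (z j : ℝ)| = |(z j : ℝ) - (z' j : ℝ)| := abs_sub_comm _ _
    rw [this]
    nlinarith
  linarith

lemma biUnion_vol {d : ℕ} {L R : ℝ} (hR : 0 < R) (hRL : R ≤ L)
    {A : Set (EuclideanSpace ℝ (Fin d))} (hAQ : A ⊆ cube 0 R) (hA : MeasurableSet A)
    (S : Finset (Fin d → ℤ)) :
    volume (⋃ z ∈ S, trS L A z) = S.card • volume A := by
  rw [measure_biUnion_finset (fun z _ z' _ h => trS_disj hR hRL hAQ h) (fun z _ => trS_meas L hA z)]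
  simp [trS_vol]

lemma lim_aux (d : ℕ) (L c₁ c₂ vA : ℝ) (hL : 0 < L) :
    Filter.Tendsto (fun T : ℝ => ((2*(T - c₁)/L + c₂)/(2*T))^d * vA) atTop
      (nhds ((1/L)^d * vA)) := by
  have h1 : Filter.Tendsto (fun T : ℝ => 1/L + (c₂/2 - c₁/L) * T⁻¹) atTop
      (nhds (1/L + (c₂/2 - c₁/L) * 0)) :=
    tendsto_const_nhds.add (tendsto_inv_atTop_zero.const_mul _)
  rw [mul_zero, add_zero] at h1
  have h2 : (fun T : ℝ => 1/L + (c₂/2 - c₁/L) * T⁻¹) =ᶠ[atTop]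
      (fun T : ℝ => (2*(T - c₁)/L + c₂)/(2*T)) := by
    filter_upwards [eventually_gt_atTop 0] with T hT
    field_simp
    ring
  exact ((h1.congr' h2).pow d).mul_const vA


lemma volA_fin {d : ℕ} {R : ℝ} {A : Set (EuclideanSpace ℝ (Fin d))}
    (hAQ : A ⊆ cube 0 R) : volume A ≠ ⊤ := by
  have hb : Bornology.IsBounded A := by
    rw [isBounded_iff_forall_norm_le]
    refine ⟨Real.sqrt (d * (R/2)^2), fun y hy => ?_⟩
    rw [EuclideanSpace.norm_eq]
    apply Real.sqrt_le_sqrt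
    calc ∑ i, ‖y i‖^2 ≤ ∑ _i : Fin d, (R/2)^2 := by
          refine Finset.sum_le_sum fun i _ => ?_
          rw [Real.norm_eq_abs]
          have h3 : |y i| < R / 2 := by simpa using hAQ hy i
          exact pow_le_pow_left₀ (abs_nonneg _) h3.le 2
      _ = d * (R/2)^2 := by simp [Finset.sum_const, Finset.card_univ]
  exact hb.measure_lt_top.ne

lemma Scard {d : ℕ} (m : ℤ) (hm : 0 ≤ m) :
    (((Fintype.piFinset fun _ : Fin d => Finset.Icc (-m) m).card : ℝ)) = (2*(m:ℝ)+1)^d := by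
  have h1 : (Finset.Icc (-m) m).card = (2*m+1).toNat := by
    rw [Int.card_Icc]; congr 1; ring
  have h2 : ((2*m+1).toNat : ℝ) = 2*(m:ℝ)+1 := by
    have h3 := Int.toNat_of_nonneg (by linarith : (0:ℤ) ≤ 2*m+1)
    have h4 := congrArg (fun x : ℤ => (x : ℝ)) h3
    push_cast at h4
    linarith
  rw [Fintype.card_piFinset]
  simp only [h1, Finset.prod_const, Finset.card_univ, Fintype.card_fin]
  rw [Nat.cast_pow, h2]

lemma part2 {d : ℕ} (P : Set (EuclideanSpace ℝ (Fin d)))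
    (R : ℝ) (hR : 0 < R)
    (A : Set (EuclideanSpace ℝ (Fin d))) (hAQ : A ⊆ cube 0 R) (hA : MeasurableSet A)
    (A' : Set (EuclideanSpace ℝ (Fin d)))
    (hA' : A' = {y | ∃ a ∈ A, ∃ z : Fin d → ℤ, y = a + lvec (R + Metric.diam P) z}) :
    Tendsto (fun T : ℝ =>
        (volume (A' ∩ {y : EuclideanSpace ℝ (Fin d) | ∀ j, |y j| ≤ T})).toReal / (2 * T) ^ d)
      atTop (nhds ((volume A).toReal / (R + Metric.diam P) ^ d)) := by
  set L := R + Metric.diam P with hLdef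
  have hdiam : 0 ≤ Metric.diam P := Metric.diam_nonneg
  have hRL : R ≤ L := by rw [hLdef]; linarith
  have hL : 0 < L := lt_of_lt_of_le hR hRL
  set vA := (volume A).toReal with hvA
  have hvA0 : 0 ≤ vA := ENNReal.toReal_nonneg
  have hAfin : volume A ≠ ⊤ := volA_fin hAQ
  have hgoal : (volume A).toReal / L ^ d = (1/L)^d * vA := by
    rw [div_pow, one_pow, hvA]; ring
  rw [hgoal]
  have hlo := lim_aux d L (R/2) (-1) vA hL
  have hhi := lim_aux d L (-(R/2)) 3 vA hL
  refine tendsto_of_tendsto_of_tendsto_of_le_of_le' hlo hhi ?_ ?_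
  · -- lower bound
    filter_upwards [eventually_ge_atTop (R/2 + L)] with T hT
    have hTpos : 0 < T := by linarith
    have hx : (1:ℝ) ≤ (T - R/2)/L := (one_le_div hL).mpr (by linarith)
    set m := ⌊(T - R/2)/L⌋ with hm
    have hm1 : (1:ℤ) ≤ m := Int.le_floor.mpr (by exact_mod_cast hx)
    have hmle : (m:ℝ) ≤ (T - R/2)/L := Int.floor_le _
    have hmgt : (T - R/2)/L - 1 < (m:ℝ) := Int.sub_one_lt_floor _
    have hm0R : (1:ℝ) ≤ (m:ℝ) := by exact_mod_cast hm1
    set S : Finset (Fin d → ℤ) := Fintype.piFinset fun _ : Fin d => Finset.Icc (-m) m with hS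
    have hsubset : ∀ z ∈ S, trS L A z ⊆ A' ∩ {y : EuclideanSpace ℝ (Fin d) | ∀ j, |y j| ≤ T} := by
      rintro z hzS y ⟨a, ha, rfl⟩
      constructor
      · rw [hA']; exact ⟨a, ha, z, rfl⟩
      · intro j
        have hzj : z j ∈ Finset.Icc (-m) m := Fintype.mem_piFinset.mp hzS j
        rw [Finset.mem_Icc] at hzj
        have hzjR : |(z j : ℝ)| ≤ (m:ℝ) := by
          rw [← Int.cast_abs]
          exact_mod_cast abs_le.mpr hzj
        have haj : |a j| < R / 2 := by simpa using hAQ ha j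
        have hLm : L * (m:ℝ) ≤ T - R/2 := by
          rw [← le_div_iff₀' hL]; exact hmle
        show |(a + lvec L z) j| ≤ T
        have e0 : |(a + lvec L z) j| = |a j + L * (z j : ℝ)| := rfl
        rw [e0]
        calc |a j + L * (z j : ℝ)| ≤ |a j| + |L * (z j : ℝ)| := abs_add_le _ _
          _ = |a j| + L * |(z j : ℝ)| := by rw [abs_mul, abs_of_pos hL]
          _ ≤ R/2 + L * (m:ℝ) := by
              have h5 := mul_le_mul_of_nonneg_left hzjR hL.le
              exact add_le_add haj.le h5
          _ ≤ T := by linarith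
    have hlow : (S.card : ENNReal) * volume A
        ≤ volume (A' ∩ {y : EuclideanSpace ℝ (Fin d) | ∀ j, |y j| ≤ T}) := by
      rw [← nsmul_eq_mul, ← biUnion_vol hR hRL hAQ hA S]
      exact measure_mono (Set.iUnion₂_subset hsubset)
    set m' := ⌈(T + R/2)/L⌉ with hm'
    have hm'0 : (0:ℤ) ≤ m' := Int.ceil_nonneg (by positivity)
    have hm'ge : (T + R/2)/L ≤ (m':ℝ) := Int.le_ceil _
    set S' : Finset (Fin d → ℤ) := Fintype.piFinset fun _ : Fin d => Finset.Icc (-m') m' with hS'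
    have hsubset' : A' ∩ {y : EuclideanSpace ℝ (Fin d) | ∀ j, |y j| ≤ T}
        ⊆ ⋃ z ∈ S', trS L A z := by
      rintro y ⟨hyA', hyB⟩
      rw [hA'] at hyA'
      obtain ⟨a, ha, z, rfl⟩ := hyA'
      have hzS' : z ∈ S' := by
        rw [hS', Fintype.mem_piFinset]
        intro j
        rw [Finset.mem_Icc, ← abs_le]
        have hyj : |a j + L * (z j:ℝ)| ≤ T := hyB j
        have haj : |a j| < R / 2 := by simpa using hAQ ha j
        have h1 : |L * (z j:ℝ)| ≤ T + R/2 := by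
          have h6 := abs_sub (a j + L * (z j:ℝ)) (a j)
          have h2 : |a j + L * (z j:ℝ) - a j| = |L * (z j:ℝ)| := by ring_nf
          rw [h2] at h6
          linarith
        have h3 : L * |(z j:ℝ)| ≤ T + R/2 := by rwa [abs_mul, abs_of_pos hL] at h1
        have h4 : |(z j:ℝ)| ≤ (T + R/2)/L := by rwa [← le_div_iff₀' hL] at h3
        have h5 : |(z j:ℝ)| ≤ (m':ℝ) := h4.trans hm'ge
        rw [← Int.cast_abs] at h5
        exact_mod_cast h5
      exact Set.mem_biUnion hzS' ⟨a, ha, rfl⟩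
    have hup : volume (A' ∩ {y : EuclideanSpace ℝ (Fin d) | ∀ j, |y j| ≤ T})
        ≤ (S'.card : ENNReal) * volume A := by
      rw [← nsmul_eq_mul, ← biUnion_vol hR hRL hAQ hA S']
      exact measure_mono hsubset'
    have hfin2 : volume (A' ∩ {y : EuclideanSpace ℝ (Fin d) | ∀ j, |y j| ≤ T}) ≠ ⊤ :=
      (lt_of_le_of_lt hup (ENNReal.mul_lt_top (ENNReal.natCast_ne_top _).lt_top
        hAfin.lt_top)).ne
    have hlowR : (S.card : ℝ) * vA
        ≤ (volume (A' ∩ {y : EuclideanSpace ℝ (Fin d) | ∀ j, |y j| ≤ T})).toReal := by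
      have h := ENNReal.toReal_mono hfin2 hlow
      rwa [ENNReal.toReal_mul, ENNReal.toReal_natCast] at h
    have hScard : (S.card : ℝ) = (2*(m:ℝ)+1)^d := Scard m (by linarith)
    have hbase : (0:ℝ) ≤ 2*(T - R/2)/L + (-1) := by
      have h7 : 2*(T - R/2)/L = 2*((T - R/2)/L) := by ring
      rw [h7]; linarith
    have hcard_lo : (2*(T - R/2)/L + (-1))^d ≤ (S.card : ℝ) := by
      rw [hScard]
      apply pow_le_pow_left₀ hbase
      have h7 : 2*(T - R/2)/L = 2*((T - R/2)/L) := by ring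
      rw [h7]; linarith
    have h2T : (0:ℝ) < (2*T)^d := by positivity
    calc ((2*(T - R/2)/L + (-1))/(2*T))^d * vA
        = (2*(T - R/2)/L + (-1))^d * vA / (2*T)^d := by rw [div_pow]; ring
      _ ≤ (S.card : ℝ) * vA / (2*T)^d := by
          gcongr
      _ ≤ _ := by gcongr
  · filter_upwards [eventually_ge_atTop (R/2 + L)] with T hT
    have hTpos : 0 < T := by linarith
    set m' := ⌈(T + R/2)/L⌉ with hm'
    have hm'0 : (0:ℤ) ≤ m' := Int.ceil_nonneg (by positivity)
    have hm'ge : (T + R/2)/L ≤ (m':ℝ) := Int.le_ceil _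
    have hm'lt : (m':ℝ) < (T + R/2)/L + 1 := Int.ceil_lt_add_one _
    have hm'0R : (0:ℝ) ≤ (m':ℝ) := by exact_mod_cast hm'0
    set S' : Finset (Fin d → ℤ) := Fintype.piFinset fun _ : Fin d => Finset.Icc (-m') m' with hS'
    have hsubset' : A' ∩ {y : EuclideanSpace ℝ (Fin d) | ∀ j, |y j| ≤ T}
        ⊆ ⋃ z ∈ S', trS L A z := by
      rintro y ⟨hyA', hyB⟩
      rw [hA'] at hyA'
      obtain ⟨a, ha, z, rfl⟩ := hyA'
      have hzS' : z ∈ S' := by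
        rw [hS', Fintype.mem_piFinset]
        intro j
        rw [Finset.mem_Icc, ← abs_le]
        have hyj : |a j + L * (z j:ℝ)| ≤ T := hyB j
        have haj : |a j| < R / 2 := by simpa using hAQ ha j
        have h1 : |L * (z j:ℝ)| ≤ T + R/2 := by
          have h6 := abs_sub (a j + L * (z j:ℝ)) (a j)
          have h2 : |a j + L * (z j:ℝ) - a j| = |L * (z j:ℝ)| := by ring_nf
          rw [h2] at h6
          linarith
        have h3 : L * |(z j:ℝ)| ≤ T + R/2 := by rwa [abs_mul, abs_of_pos hL] at h1
        have h4 : |(z j:ℝ)| ≤ (T + R/2)/L := by rwa [← le_div_iff₀' hL] at h3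
        have h5 : |(z j:ℝ)| ≤ (m':ℝ) := h4.trans hm'ge
        rw [← Int.cast_abs] at h5
        exact_mod_cast h5
      exact Set.mem_biUnion hzS' ⟨a, ha, rfl⟩
    have hup : volume (A' ∩ {y : EuclideanSpace ℝ (Fin d) | ∀ j, |y j| ≤ T})
        ≤ (S'.card : ENNReal) * volume A := by
      rw [← nsmul_eq_mul, ← biUnion_vol hR hRL hAQ hA S']
      exact measure_mono hsubset'
    have hmulfin : (S'.card : ENNReal) * volume A ≠ ⊤ :=
      (ENNReal.mul_lt_top (ENNReal.natCast_ne_top _).lt_top hAfin.lt_top).ne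
    have hupR : (volume (A' ∩ {y : EuclideanSpace ℝ (Fin d) | ∀ j, |y j| ≤ T})).toReal
        ≤ (S'.card : ℝ) * vA := by
      have h := ENNReal.toReal_mono hmulfin hup
      rwa [ENNReal.toReal_mul, ENNReal.toReal_natCast] at h
    have hS'card : (S'.card : ℝ) = (2*(m':ℝ)+1)^d := Scard m' hm'0
    have hcard_hi : (S'.card : ℝ) ≤ (2*(T - -(R/2))/L + 3)^d := by
      rw [hS'card]
      apply pow_le_pow_left₀ (by linarith)
      have h7 : 2*(T - -(R/2))/L = 2*((T + R/2)/L) := by ring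
      rw [h7]; linarith
    have h2T : (0:ℝ) < (2*T)^d := by positivity
    calc (volume (A' ∩ {y : EuclideanSpace ℝ (Fin d) | ∀ j, |y j| ≤ T})).toReal / (2*T)^d
        ≤ (S'.card : ℝ) * vA / (2*T)^d := by gcongr
      _ ≤ (2*(T - -(R/2))/L + 3)^d * vA / (2*T)^d := by gcongr
      _ = ((2*(T - -(R/2))/L + 3)/(2*T))^d * vA := by rw [div_pow]; ring


/-- the periodization of a `P`-avoiding subset of a cube avoids `P` and has a
well-defined density `vol(A)/(R + diam P)^d`. -/
theorem stmt_3 {d : ℕ} (hd : 0 < d) (P : Set (EuclideanSpace ℝ (Fin d)))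
    (hPfin : P.Finite) (hPne : P.Nonempty) (R : ℝ) (hR : 0 < R)
    (A : Set (EuclideanSpace ℝ (Fin d))) (hAQ : A ⊆ cube 0 R) (hA : MeasurableSet A)
    (hav : ¬ hasCopy A P)
    (A' : Set (EuclideanSpace ℝ (Fin d)))
    (hA' : A' = {y | ∃ a ∈ A, ∃ z : Fin d → ℤ,
        y = a + (EuclideanSpace.equiv (Fin d) ℝ).symm
          (fun j => (R + Metric.diam P) * (z j : ℝ))}) :
    ¬ hasCopy A' P ∧
      Tendsto (fun T : ℝ =>
          (volume (A' ∩ {y : EuclideanSpace ℝ (Fin d) | ∀ j, |y j| ≤ T})).toReal / (2 * T) ^ d)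
        atTop (nhds ((volume A).toReal / (R + Metric.diam P) ^ d)) := by
  constructor
  · exact part1 P hPfin hPne R hR A hAQ hav A' hA'
  · exact part2 P R hR A hAQ hA A' hA'
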